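/- Let l, N ∈ ℕ and M : Fin N → ℕ. In the multivariate polynomial ring ℤ[X_{(i,k)} : (i,k) ∈ Fin l × Fin N], the coefficient of the squarefree monomial ∏_{(i,k)} X_{(i,k)} (exponent 1 in every variable) in the product ∏_{k ∈ Fin N} (1 + ∑_{i ∈ Fin l} X_{(i,k)})^{M k} equals ∏_{k ∈ Fin N} Nat.descFactorial (M k) l. In particular, if M k ≥ l for every k, this coefficient is nonzero. -/

import Mathlib

open MvPolynomial Finset

/-- Coefficient of the all-ones monomial in `(∑ X i)^l` is `l!`. -/
lemma aux_coeff_sum_pow (l : ℕ) :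
    MvPolynomial.coeff (Finsupp.equivFunOnFinite.symm fun _ : Fin l => 1)
      ((∑ i : Fin l, MvPolynomial.X i : MvPolynomial (Fin l) ℤ) ^ l)
      = (Nat.factorial l : ℤ) := by
  rw [Finset.sum_pow_eq_sum_piAntidiag, MvPolynomial.coeff_sum]
  rw [Finset.sum_eq_single (fun _ : Fin l => 1)]
  · have hmon : ∀ k : Fin l → ℕ,
        (∏ i : Fin l, (MvPolynomial.X i : MvPolynomial (Fin l) ℤ) ^ k i)
          = MvPolynomial.monomial (Finsupp.equivFunOnFinite.symm k) 1 := by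
      intro k
      rw [← MvPolynomial.prod_X_pow_eq_monomial]
      refine (Finset.prod_subset (Finset.subset_univ _) ?_).symm
      intro i _ hi
      have : (Finsupp.equivFunOnFinite.symm k) i = 0 := by
        simpa using Finsupp.notMem_support_iff.1 hi
      simp only [Finsupp.coe_equivFunOnFinite_symm] at this ⊢
      simp [this]
    have : ((Nat.multinomial Finset.univ (fun _ : Fin l => 1) : ℤ)) = (Nat.factorial l : ℤ) := by
      have := Nat.multinomial_spec (Finset.univ : Finset (Fin l)) (fun _ => 1)
      simp only [Nat.factorial_one, Finset.prod_const_one, one_mul, Finset.sum_const,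
        Finset.card_univ, Fintype.card_fin, smul_eq_mul, mul_one] at this
      exact_mod_cast congrArg (Nat.cast : ℕ → ℤ) this
    rw [hmon]
    have hC : ((Nat.multinomial Finset.univ (fun _ : Fin l => 1) : MvPolynomial (Fin l) ℤ))
        = MvPolynomial.C ((Nat.multinomial Finset.univ (fun _ : Fin l => 1) : ℤ)) := by
      simp
    rw [hC, MvPolynomial.coeff_C_mul, MvPolynomial.coeff_monomial, if_pos rfl, mul_one, this]
  · intro k hk hne
    have hmon : (∏ i : Fin l, (MvPolynomial.X i : MvPolynomial (Fin l) ℤ) ^ k i)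
        = MvPolynomial.monomial (Finsupp.equivFunOnFinite.symm k) 1 := by
      rw [← MvPolynomial.prod_X_pow_eq_monomial]
      refine (Finset.prod_subset (Finset.subset_univ _) ?_).symm
      intro i _ hi
      have : (Finsupp.equivFunOnFinite.symm k) i = 0 := by
        simpa using Finsupp.notMem_support_iff.1 hi
      simp only [Finsupp.coe_equivFunOnFinite_symm] at this ⊢
      simp [this]
    rw [hmon]
    have : (Finsupp.equivFunOnFinite.symm k)
        ≠ Finsupp.equivFunOnFinite.symm fun _ : Fin l => 1 := by
      intro h
      exact hne (Finsupp.equivFunOnFinite.symm.injective h)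
    have hC : ((Nat.multinomial Finset.univ k : MvPolynomial (Fin l) ℤ))
        = MvPolynomial.C ((Nat.multinomial Finset.univ k : ℤ)) := by simp
    rw [hC, MvPolynomial.coeff_C_mul, MvPolynomial.coeff_monomial, if_neg this, mul_zero]
  · intro h
    exfalso
    apply h
    rw [Finset.mem_piAntidiag]
    refine ⟨by simp, fun i _ => Finset.mem_univ i⟩

/-- Coefficient of the all-ones monomial in `(1 + ∑ X i)^m` is `m(m-1)⋯(m-l+1)`. -/
lemma aux_coeff_one_add_sum_pow (l m : ℕ) :
    MvPolynomial.coeff (Finsupp.equivFunOnFinite.symm fun _ : Fin l => 1)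
      ((1 + ∑ i : Fin l, MvPolynomial.X i : MvPolynomial (Fin l) ℤ) ^ m)
      = (Nat.descFactorial m l : ℤ) := by
  rw [add_comm (1 : MvPolynomial (Fin l) ℤ), add_pow, MvPolynomial.coeff_sum]
  have hhom : ∀ j : ℕ, MvPolynomial.IsHomogeneous
      ((∑ i : Fin l, MvPolynomial.X i : MvPolynomial (Fin l) ℤ) ^ j) j := by
    intro j
    have h1 : MvPolynomial.IsHomogeneous
        ((∑ i : Fin l, MvPolynomial.X i : MvPolynomial (Fin l) ℤ)) 1 :=
      MvPolynomial.IsHomogeneous.sum _ _ _ fun i _ => MvPolynomial.isHomogeneous_X _ _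
    simpa using h1.pow j
  have hdeg : (Finsupp.equivFunOnFinite.symm fun _ : Fin l => 1).degree = l := by
    rw [Finsupp.degree_apply]
    rw [Finset.sum_subset (Finset.subset_univ _)]
    · simp
    · intro i _ hi
      simpa using Finsupp.notMem_support_iff.1 hi
  rw [Finset.sum_eq_single l]
  · have hC : ∀ n : ℕ, ((n : MvPolynomial (Fin l) ℤ)) = MvPolynomial.C ((n : ℤ)) := by simp
    rw [one_pow, mul_one, hC, mul_comm, MvPolynomial.coeff_C_mul, aux_coeff_sum_pow,
      Nat.descFactorial_eq_factorial_mul_choose]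
    push_cast
    ring
  · intro j _ hj
    have hC : ∀ n : ℕ, ((n : MvPolynomial (Fin l) ℤ)) = MvPolynomial.C ((n : ℤ)) := by simp
    rw [one_pow, mul_one, hC, mul_comm, MvPolynomial.coeff_C_mul,
      (hhom j).coeff_eq_zero (by rw [hdeg]; exact Ne.symm hj), mul_zero]
  · intro h
    have hml : m < l := by
      simp only [Finset.mem_range, not_lt] at h
      omega
    rw [Nat.choose_eq_zero_of_lt hml]
    simp

/-- Separation of variables for coefficients of products. -/
lemma aux_coeff_mul_separated {σ : Type*} [DecidableEq σ] {S T : Set σ} (hST : ∀ x, x ∈ S → x ∈ T → False)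
    {p q : MvPolynomial σ ℤ}
    (hp : p ∈ MvPolynomial.supported ℤ S) (hq : q ∈ MvPolynomial.supported ℤ T)
    {da ds : σ →₀ ℕ} (hda : ∀ x ∈ da.support, x ∈ S) (hds : ∀ x ∈ ds.support, x ∈ T) :
    MvPolynomial.coeff (da + ds) (p * q)
      = MvPolynomial.coeff da p * MvPolynomial.coeff ds q := by
  rw [MvPolynomial.coeff_mul]
  apply Finset.sum_eq_single (da, ds)
  · rintro ⟨a, b⟩ hb hne
    by_cases hpa : MvPolynomial.coeff a p = 0
    · simp [hpa]
    by_cases hqb : MvPolynomial.coeff b q = 0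
    · simp [hqb]
    exfalso
    apply hne
    rw [Finset.HasAntidiagonal.mem_antidiagonal] at hb
    have hva : ∀ x ∈ a.support, x ∈ S := by
      intro x hx
      have hxv : x ∈ p.vars := (MvPolynomial.mem_vars x).2
        ⟨a, MvPolynomial.mem_support_iff.2 hpa, hx⟩
      exact (MvPolynomial.mem_supported.1 hp) hxv
    have hvb : ∀ x ∈ b.support, x ∈ T := by
      intro x hx
      have hxv : x ∈ q.vars := (MvPolynomial.mem_vars x).2
        ⟨b, MvPolynomial.mem_support_iff.2 hqb, hx⟩
      exact (MvPolynomial.mem_supported.1 hq) hxv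
    have hsum : ∀ x, a x + b x = da x + ds x := fun x => by
      rw [← Finsupp.add_apply, ← Finsupp.add_apply, hb]
    have key : ∀ x, a x = da x ∧ b x = ds x := by
      intro x
      by_cases hxS : x ∈ S
      · have hb0 : b x = 0 := by
          by_contra h
          exact hST x hxS (hvb x (Finsupp.mem_support_iff.2 h))
        have hds0 : ds x = 0 := by
          by_contra h
          exact hST x hxS (hds x (Finsupp.mem_support_iff.2 h))
        have := hsum x
        omega
      · have ha0 : a x = 0 := by
          by_contra h
          exact hxS (hva x (Finsupp.mem_support_iff.2 h))
        have hda0 : da x = 0 := by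
          by_contra h
          exact hxS (hda x (Finsupp.mem_support_iff.2 h))
        have := hsum x
        omega
    have h1 : a = da := Finsupp.ext fun x => (key x).1
    have h2 : b = ds := Finsupp.ext fun x => (key x).2
    subst h1; subst h2; rfl
  · intro h
    exfalso
    apply h
    rw [Finset.HasAntidiagonal.mem_antidiagonal]

lemma aux_main (l N : ℕ) (M : Fin N → ℕ) (s : Finset (Fin N)) :
    MvPolynomial.coeff
      (Finsupp.equivFunOnFinite.symm fun p : Fin l × Fin N => if p.2 ∈ s then 1 else 0)
      (∏ k ∈ s,
        ((1 + ∑ i : Fin l, MvPolynomial.X (i, k)) ^ (M k) : MvPolynomial (Fin l × Fin N) ℤ))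
      = ∏ k ∈ s, (Nat.descFactorial (M k) l : ℤ) := by
  classical
  induction s using Finset.induction with
  | empty =>
      have h0 : (Finsupp.equivFunOnFinite.symm
          fun p : Fin l × Fin N => if p.2 ∈ (∅ : Finset (Fin N)) then 1 else 0) = 0 := by
        ext p; simp
      rw [Finset.prod_empty, Finset.prod_empty, h0]
      simp
  | @insert a s ha ih =>
      rw [Finset.prod_insert ha, Finset.prod_insert ha]
      have hd : (Finsupp.equivFunOnFinite.symm
            fun p : Fin l × Fin N => if p.2 ∈ insert a s then 1 else 0)
          = (Finsupp.equivFunOnFinite.symm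
              fun p : Fin l × Fin N => if p.2 = a then 1 else 0)
            + (Finsupp.equivFunOnFinite.symm
              fun p : Fin l × Fin N => if p.2 ∈ s then 1 else 0) := by
        ext p
        simp only [Finsupp.add_apply, Finsupp.coe_equivFunOnFinite_symm,
          Finset.mem_insert]
        rcases eq_or_ne p.2 a with h | h
        · have : p.2 ∉ s := h ▸ ha
          simp [h, this, ha]
        · simp [h]
      have hinj : Function.Injective (fun i : Fin l => ((i, a) : Fin l × Fin N)) := by
        intro x y h
        simpa using congrArg Prod.fst h
      have hpm : ((1 + ∑ i : Fin l, MvPolynomial.X (i, a)) ^ (M a) :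
            MvPolynomial (Fin l × Fin N) ℤ)
          ∈ MvPolynomial.supported ℤ {p : Fin l × Fin N | p.2 = a} := by
        apply pow_mem
        apply add_mem (one_mem _)
        apply sum_mem
        intro i _
        exact (MvPolynomial.X_mem_supported).2 rfl
      have hqm : (∏ k ∈ s,
            ((1 + ∑ i : Fin l, MvPolynomial.X (i, k)) ^ (M k) :
              MvPolynomial (Fin l × Fin N) ℤ))
          ∈ MvPolynomial.supported ℤ {p : Fin l × Fin N | p.2 ∈ s} := by
        apply prod_mem
        intro k hk
        apply pow_mem
        apply add_mem (one_mem _)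
        apply sum_mem
        intro i _
        exact (MvPolynomial.X_mem_supported).2 hk
      have hda : ∀ x ∈ (Finsupp.equivFunOnFinite.symm
          fun p : Fin l × Fin N => if p.2 = a then 1 else 0).support,
          x ∈ {p : Fin l × Fin N | p.2 = a} := by
        intro x hx
        rw [Finsupp.mem_support_iff] at hx
        simp only [Finsupp.coe_equivFunOnFinite_symm] at hx
        by_contra h
        exact hx (if_neg h)
      have hds : ∀ x ∈ (Finsupp.equivFunOnFinite.symm
          fun p : Fin l × Fin N => if p.2 ∈ s then 1 else 0).support,
          x ∈ {p : Fin l × Fin N | p.2 ∈ s} := by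
        intro x hx
        rw [Finsupp.mem_support_iff] at hx
        simp only [Finsupp.coe_equivFunOnFinite_symm] at hx
        by_contra h
        exact hx (if_neg h)
      have hdisj : ∀ x : Fin l × Fin N,
          x ∈ {p : Fin l × Fin N | p.2 = a} → x ∈ {p : Fin l × Fin N | p.2 ∈ s} → False := by
        intro x h1 h2
        exact ha (h1 ▸ h2)
      rw [hd, aux_coeff_mul_separated hdisj hpm hqm hda hds, ih]
      congr 1
      have hren : ((1 + ∑ i : Fin l, MvPolynomial.X (i, a)) ^ (M a) :
            MvPolynomial (Fin l × Fin N) ℤ)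
          = MvPolynomial.rename (fun i : Fin l => (i, a))
              ((1 + ∑ i : Fin l, MvPolynomial.X i) ^ (M a)) := by
        simp [map_pow, map_add, map_one, map_sum]
      have hmap : (Finsupp.equivFunOnFinite.symm
            fun p : Fin l × Fin N => if p.2 = a then 1 else 0)
          = Finsupp.mapDomain (fun i : Fin l => (i, a))
              (Finsupp.equivFunOnFinite.symm fun _ : Fin l => 1) := by
        ext ⟨i, k⟩
        rcases eq_or_ne k a with rfl | h
        · rw [show ((i, k) : Fin l × Fin N) = (fun i : Fin l => (i, k)) i from rfl,
            Finsupp.mapDomain_apply hinj]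
          simp
        · rw [Finsupp.mapDomain_notin_range]
          · simp [h]
          · rintro ⟨j, hj⟩
            exact h (congrArg Prod.snd hj).symm
      rw [hren, hmap, MvPolynomial.coeff_rename_mapDomain _ hinj,
        aux_coeff_one_add_sum_pow]

/-- The key cohomological computation of Lemma 4.1: in
`ℤ[X_{(i,k)} : (i,k) ∈ Fin l × Fin N]`, the coefficient of the top squarefree monomial
in `∏ₖ (1 + ∑ᵢ X_{(i,k)})^{M k}` equals `∏ₖ (M k)(M k - 1)⋯(M k - l + 1)`;
in particular it is nonzero if `M k ≥ l` for every `k`. -/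
theorem stmt5 (l N : ℕ) (M : Fin N → ℕ) :
    MvPolynomial.coeff (Finsupp.equivFunOnFinite.symm fun _ : Fin l × Fin N => 1)
        (∏ k : Fin N,
          ((1 + ∑ i : Fin l, MvPolynomial.X (i, k)) ^ (M k) :
            MvPolynomial (Fin l × Fin N) ℤ))
      = ∏ k : Fin N, (Nat.descFactorial (M k) l : ℤ) ∧
    ((∀ k, l ≤ M k) →
      MvPolynomial.coeff (Finsupp.equivFunOnFinite.symm fun _ : Fin l × Fin N => 1)
          (∏ k : Fin N,
            ((1 + ∑ i : Fin l, MvPolynomial.X (i, k)) ^ (M k) :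
              MvPolynomial (Fin l × Fin N) ℤ)) ≠ 0) := by
  have h := aux_main l N M Finset.univ
  simp only [Finset.mem_univ, if_true] at h
  refine ⟨h, fun hM => ?_⟩
  rw [h]
  apply Finset.prod_ne_zero_iff.2
  intro k _
  have : Nat.descFactorial (M k) l ≠ 0 := by
    rw [Ne, Nat.descFactorial_eq_zero_iff_lt, not_lt]
    exact hM k
  exact_mod_cast this
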